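/- arXiv:2111.03298 — 2 statements merged into one kernel-verified Lean document; each statement's English description precedes it below -/
import Mathlib

section
/- If G is a connected graph with at least two vertices, then γ_t(G*) ≤ γ_t(G), where G* is the double graph of G. -/
open SimpleGraph

/-- The total domination number of a graph. -/
noncomputable def totalDominationNumber {V : Type*} (G : SimpleGraph V) : ℕ :=
  sInf {k | ∃ D : Finset V, (∀ v : V, ∃ u ∈ D, G.Adj v u) ∧ D.card = k}

/-- The annihilation number of a graph. -/
noncomputable def annihilationNumber {V : Type*} (G : SimpleGraph V) : ℕ :=
  sSup {k | ∃ S : Finset V, S.card = k ∧ ∑ v ∈ S, (G.neighborSet v).ncard ≤ G.edgeSet.ncard}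

/-- The double graph `G*` of `G`: two disjoint copies `G₁, G₂` of `G` (the copy of `u`
in `Gᵢ` being `(u, i)`), where for each edge `uv` of `G` the edges `u₁v₂` and `u₂v₁`
are added; equivalently, `(u, i)` and `(v, j)` are adjacent iff `uv ∈ E(G)`. -/
def doubleGraph {V : Type*} (G : SimpleGraph V) : SimpleGraph (V × Fin 2) where
  Adj a b := G.Adj a.1 b.1
  symm := ⟨fun _ _ h => G.adj_symm h⟩
  loopless := ⟨fun a h => G.irrefl h⟩

/-- If `G` is a connected graph with at least two vertices, then
`γₜ(G*) ≤ γₜ(G)`. -/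
theorem stmt_14 {V : Type*} [Fintype V] (G : SimpleGraph V)
    (hconn : G.Connected) (hn : 2 ≤ Fintype.card V) :
    totalDominationNumber (doubleGraph G) ≤ totalDominationNumber G := by
  classical
  have hadj : ∀ v : V, ∃ u, G.Adj v u := by
    intro v
    obtain ⟨w, hw⟩ := Fintype.exists_ne_of_one_lt_card hn v
    obtain ⟨p⟩ := hconn v w
    cases p with
    | nil => exact absurd rfl hw.symm
    | cons h p => exact ⟨_, h⟩
  have hne : {k | ∃ D : Finset V, (∀ v : V, ∃ u ∈ D, G.Adj v u) ∧ D.card = k}.Nonempty := by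
    refine ⟨(Finset.univ : Finset V).card, Finset.univ, fun v => ?_, rfl⟩
    obtain ⟨u, hu⟩ := hadj v
    exact ⟨u, Finset.mem_univ u, hu⟩
  apply csInf_le_csInf (OrderBot.bddBelow _) hne
  rintro k ⟨D, hD, rfl⟩
  refine ⟨D.image (fun u => (u, 0)), fun v => ?_, ?_⟩
  · obtain ⟨u, hu, huv⟩ := hD v.1
    exact ⟨(u, 0), Finset.mem_image_of_mem _ hu, huv⟩
  · exact Finset.card_image_of_injective _ (fun a b h => (Prod.mk.injEq _ _ _ _ ▸ h).1)
end

section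
/- If G is a connected graph with at least one edge, then a(μ(G)) ≥ a(G) + 1, where μ(G) is the Mycielskian of G. -/
open SimpleGraph

/-- The Mycielskian `μ(G)` of `G`: it contains a copy of `G` (the vertices `Sum.inl v`),
for each vertex `v` of `G` a twin vertex `Sum.inr (Sum.inl v)`, and one further vertex
`w = Sum.inr (Sum.inr ())` adjacent to all the twin vertices; each edge `v v'` of `G`
yields the edges between `Sum.inl v` and the twin of `v'` (and vice versa). -/
def mycielskian {V : Type*} (G : SimpleGraph V) : SimpleGraph (V ⊕ (V ⊕ Unit)) :=
  SimpleGraph.fromRel (fun a b =>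
    (∃ u v, G.Adj u v ∧ a = Sum.inl u ∧ b = Sum.inl v) ∨
    (∃ u v, G.Adj u v ∧ a = Sum.inl u ∧ b = Sum.inr (Sum.inl v)) ∨
    (∃ u, a = Sum.inr (Sum.inl u) ∧ b = Sum.inr (Sum.inr ())))

section Aux

variable {V : Type*} (G : SimpleGraph V)

lemma myc_nbr_inl (v : V) :
    (mycielskian G).neighborSet (Sum.inl v) =
      Sum.inl '' (G.neighborSet v) ∪ (fun u => Sum.inr (Sum.inl u)) '' (G.neighborSet v) := by
  ext b
  simp only [mem_neighborSet, mycielskian, fromRel_adj, Set.mem_union, Set.mem_image]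
  constructor
  · rintro ⟨hne, h | h | h⟩ <;> aesop (add safe forward Adj.symm)
  · rintro (⟨u, hu, rfl⟩ | ⟨u, hu, rfl⟩) <;> aesop (add safe forward Adj.symm)

lemma myc_nbr_twin (v : V) :
    (mycielskian G).neighborSet (Sum.inr (Sum.inl v)) =
      Sum.inl '' (G.neighborSet v) ∪ {Sum.inr (Sum.inr ())} := by
  ext b
  simp only [mem_neighborSet, mycielskian, fromRel_adj, Set.mem_union, Set.mem_image,
    Set.mem_singleton_iff]
  constructor
  · rintro ⟨hne, h | h | h⟩ <;> aesop (add safe forward Adj.symm)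
  · rintro (⟨u, hu, rfl⟩ | rfl) <;> aesop (add safe forward Adj.symm)

lemma myc_nbr_w :
    (mycielskian G).neighborSet (Sum.inr (Sum.inr ())) =
      (fun u => Sum.inr (Sum.inl u)) '' (Set.univ : Set V) := by
  ext b
  simp only [mem_neighborSet, mycielskian, fromRel_adj, Set.mem_image, Set.mem_univ]
  constructor
  · rintro ⟨hne, h | h | h⟩ <;> aesop (add safe forward Adj.symm)
  · rintro ⟨u, _, rfl⟩; aesop (add safe forward Adj.symm)

lemma inr_inl_inj : Function.Injective (fun u : V => (Sum.inr (Sum.inl u) : V ⊕ (V ⊕ Unit))) := by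
  intro a b h; simpa using h

variable [Fintype V]

lemma myc_deg_inl (v : V) :
    ((mycielskian G).neighborSet (Sum.inl v)).ncard = 2 * (G.neighborSet v).ncard := by
  rw [myc_nbr_inl, Set.ncard_union_eq, Set.ncard_image_of_injective _ Sum.inl_injective,
    Set.ncard_image_of_injective _ inr_inl_inj]
  · ring
  · rw [Set.disjoint_left]; rintro x ⟨a, -, rfl⟩ ⟨b, -, hb⟩; exact absurd hb (by simp)

lemma myc_deg_twin (v : V) :
    ((mycielskian G).neighborSet (Sum.inr (Sum.inl v))).ncard = (G.neighborSet v).ncard + 1 := by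
  rw [myc_nbr_twin, Set.ncard_union_eq, Set.ncard_image_of_injective _ Sum.inl_injective,
    Set.ncard_singleton]
  rw [Set.disjoint_left]; rintro x ⟨a, -, rfl⟩ hb; exact absurd hb (by simp)

lemma myc_deg_w (x : Unit) :
    ((mycielskian G).neighborSet (Sum.inr (Sum.inr x))).ncard = Fintype.card V := by
  cases x
  rw [myc_nbr_w, Set.ncard_image_of_injective _ inr_inl_inj, Set.ncard_univ,
    Nat.card_eq_fintype_card]

lemma handshake {W : Type*} [Fintype W] (H : SimpleGraph W) :
    ∑ v, (H.neighborSet v).ncard = 2 * H.edgeSet.ncard := by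
  classical
  have h1 : ∀ v, (H.neighborSet v).ncard = H.degree v := by
    intro v
    rw [Set.ncard_eq_toFinset_card', Set.toFinset_card, card_neighborSet_eq_degree]
  have h2 : H.edgeSet.ncard = H.edgeFinset.card := by
    rw [Set.ncard_eq_toFinset_card']
    congr 1
  simp only [h1, h2]
  exact H.sum_degrees_eq_twice_card_edges

lemma myc_edges :
    (mycielskian G).edgeSet.ncard = 3 * G.edgeSet.ncard + Fintype.card V := by
  have h := handshake (mycielskian G)
  rw [Fintype.sum_sum_type, Fintype.sum_sum_type] at h
  simp only [myc_deg_inl, myc_deg_twin, myc_deg_w, Finset.univ_unique, Finset.sum_singleton] at h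
  rw [Finset.sum_add_distrib, ← Finset.mul_sum, handshake G, Finset.sum_const,
    Finset.card_univ, smul_eq_mul, mul_one] at h
  omega

end Aux

/-- If `G` is a connected graph with at least one edge, then
`a(μ(G)) ≥ a(G) + 1`. -/
theorem stmt_17 {V : Type*} [Fintype V] (G : SimpleGraph V)
    (hconn : G.Connected) (hedge : G.edgeSet.Nonempty) :
    annihilationNumber G + 1 ≤ annihilationNumber (mycielskian G) := by
  classical
  set A := {k | ∃ S : Finset V, S.card = k ∧ ∑ v ∈ S, (G.neighborSet v).ncard ≤ G.edgeSet.ncard}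
    with hA
  have h0 : 0 ∈ A := ⟨∅, by simp⟩
  have hbdd : BddAbove A := by
    refine ⟨Fintype.card V, ?_⟩
    rintro k ⟨S, rfl, -⟩
    simpa using S.card_le_univ
  obtain ⟨S, hScard, hSsum⟩ : annihilationNumber G ∈ A := Nat.sSup_mem ⟨0, h0⟩ hbdd
  set w : V ⊕ (V ⊕ Unit) := Sum.inr (Sum.inr ()) with hw
  set T : Finset (V ⊕ (V ⊕ Unit)) := S.image Sum.inl ∪ {w} with hT
  have hdisj : Disjoint (S.image Sum.inl) ({w} : Finset (V ⊕ (V ⊕ Unit))) := by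
    simp [Finset.disjoint_left, hw]
  have hTcard : T.card = annihilationNumber G + 1 := by
    rw [hT, Finset.card_union_of_disjoint hdisj,
      Finset.card_image_of_injective _ Sum.inl_injective, hScard, Finset.card_singleton]
  have hTsum : ∑ x ∈ T, ((mycielskian G).neighborSet x).ncard ≤ (mycielskian G).edgeSet.ncard := by
    rw [hT, Finset.sum_union hdisj, Finset.sum_image (fun a _ b _ h => Sum.inl_injective h),
      Finset.sum_singleton, myc_edges]
    simp only [myc_deg_inl, hw, myc_deg_w]
    rw [← Finset.mul_sum]
    have : G.edgeSet.ncard ≤ 3 * G.edgeSet.ncard := by omega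
    omega
  have hmem : annihilationNumber G + 1 ∈
      {k | ∃ S : Finset (V ⊕ (V ⊕ Unit)), S.card = k ∧
        ∑ v ∈ S, ((mycielskian G).neighborSet v).ncard ≤ (mycielskian G).edgeSet.ncard} :=
    ⟨T, hTcard, hTsum⟩
  have hbdd2 : BddAbove {k | ∃ S : Finset (V ⊕ (V ⊕ Unit)), S.card = k ∧
      ∑ v ∈ S, ((mycielskian G).neighborSet v).ncard ≤ (mycielskian G).edgeSet.ncard} := by
    refine ⟨Fintype.card (V ⊕ (V ⊕ Unit)), ?_⟩
    rintro k ⟨S, rfl, -⟩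
    simpa using S.card_le_univ
  exact le_csSup hbdd2 hmem
end
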